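/- Suppose the costs obey increasing differences, i.e. for all agents i < i' and all actions 0 ≤ j < j' ≤ m one has c_{i,j} − c_{i',j} < c_{i,j'} − c_{i',j'} (where c_{i,0} = 0 for every agent; in particular c_{1,j} > c_{2,j} > … > c_{n,j} for every action j ≥ 1). Given any 0 ≤ j_1 ≤ j_2 ≤ … ≤ j_n ≤ m, define the payment profile by t_j = Σ_{i'=1}^{i−1}( c_{i',j_{i'}} − c_{i'+1,j_{i'}} ) + c_{i,j_i} if j = j_i for some i (this value being independent of the choice of such i), and t_j = 0 otherwise. Then: (a) for every agent i and every action j ∈ {0,…,m}, t_j − c_{i,j} ≤ t_{j_i} − c_{i,j_i}, i.e. j_i is a best response for agent i; and (b) when each agent i takes action j_i, the principal's payoff Σ_{i=1}^n (ρ_{j_i} − t_{j_i}) equals Σ_{i=1}^{n−1} ( ρ_{j_i} − c_{i,j_i} − (n−i)(c_{i,j_i} − c_{i+1,j_i}) ) + ρ_{j_n} − c_{n,j_n}. -/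

import Mathlib

open Finset

lemma tele_Ioc (f : ℕ → ℝ) : ∀ q p, p ≤ q →
    ∑ i ∈ Finset.Ioc p q, (f i - f (i+1)) = f (p+1) - f (q+1) := by
  intro q
  induction q with
  | zero => intro p hp; interval_cases p; simp
  | succ q ih =>
    intro p hp
    rcases Nat.eq_or_lt_of_le hp with h | h
    · subst h; simp
    · have h' : p ≤ q := Nat.lt_succ_iff.mp h
      rw [Finset.sum_Ioc_succ_top h', ih p h']; ring

lemma aux_swap (d : ℕ → ℝ) : ∀ N : ℕ, ∑ i ∈ Finset.Ioc 0 N, ∑ i' ∈ Finset.Ioc 0 (i-1), d i'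
    = ∑ i ∈ Finset.Ioc 0 (N-1), ((N:ℝ) - i) * d i := by
  intro N
  induction N with
  | zero => simp
  | succ N ih =>
    rw [Finset.sum_Ioc_succ_top (Nat.zero_le N), ih]
    simp only [Nat.add_sub_cancel]
    have h1 : ∑ i ∈ Finset.Ioc 0 (N-1), ((N:ℝ) - i) * d i
        = ∑ i ∈ Finset.Ioc 0 N, ((N:ℝ) - i) * d i := by
      cases N with
      | zero => simp
      | succ N =>
        rw [Finset.sum_Ioc_succ_top (Nat.zero_le _)]
        simp
    rw [h1, ← Finset.sum_add_distrib]
    refine Finset.sum_congr rfl fun i hi => ?_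
    push_cast
    ring

/-- Under increasing differences, the explicit payment profile
`t_{j_i} = Σ_{i'=1}^{i-1}(c_{i',j_{i'}} - c_{i'+1,j_{i'}}) + c_{i,j_i}` (and `t_a = 0` for
actions not of the form `j_i`) makes `j_i` a best response for agent `i`, and the resulting
principal's payoff equals the bound of Lemma 2. -/
theorem stmt_3 (n m : ℕ) (hn : 1 ≤ n) (ρ : ℕ → ℝ) (c : ℕ → ℕ → ℝ) (j : ℕ → ℕ) (t : ℕ → ℝ)
    (hρ0 : ρ 0 = 0) (hρ : ∀ k ≤ m, 0 ≤ ρ k)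
    (hc0 : ∀ i, 1 ≤ i → i ≤ n → c i 0 = 0)
    (hcnn : ∀ i, 1 ≤ i → i ≤ n → ∀ k ≤ m, 0 ≤ c i k)
    (hid : ∀ i i' a a', 1 ≤ i → i < i' → i' ≤ n → a < a' → a' ≤ m →
      c i a - c i' a < c i a' - c i' a')
    (hjm : ∀ i, 1 ≤ i → i ≤ n → j i ≤ m)
    (hjmono : ∀ i, 1 ≤ i → i < n → j i ≤ j (i + 1))
    (ht_hit : ∀ i, 1 ≤ i → i ≤ n →
      t (j i) = ∑ i' ∈ Finset.Icc 1 (i - 1), (c i' (j i') - c (i' + 1) (j i')) + c i (j i))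
    (ht_miss : ∀ a ≤ m, (∀ i, 1 ≤ i → i ≤ n → j i ≠ a) → t a = 0) :
    (∀ i, 1 ≤ i → i ≤ n → ∀ a ≤ m, t a - c i a ≤ t (j i) - c i (j i)) ∧
    ∑ i ∈ Finset.Icc 1 n, (ρ (j i) - t (j i)) =
      ∑ i ∈ Finset.Icc 1 (n - 1),
        (ρ (j i) - c i (j i) - ((n : ℝ) - i) * (c i (j i) - c (i + 1) (j i)))
      + (ρ (j n) - c n (j n)) := by
  have hIcc : ∀ x : ℕ, Finset.Icc 1 x = Finset.Ioc 0 x := fun x => by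
    rw [← Finset.Icc_add_one_left_eq_Ioc]; rfl
  set d : ℕ → ℝ := fun i' => c i' (j i') - c (i'+1) (j i') with hd
  have hS : ∀ i, 1 ≤ i → i ≤ n → t (j i) = (∑ i' ∈ Finset.Ioc 0 (i-1), d i') + c i (j i) := by
    intro i h1 h2
    rw [ht_hit i h1 h2, hIcc]
  have hjle : ∀ q p, 1 ≤ p → p ≤ q → q ≤ n → j p ≤ j q := by
    intro q
    induction q with
    | zero => intro p h1 hpq _; omega
    | succ q ih =>
      intro p h1 hpq hqn
      rcases Nat.eq_or_lt_of_le hpq with h | h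
      · rw [h]
      · have h' : p ≤ q := Nat.lt_succ_iff.mp h
        exact le_trans (ih p h1 h' (by omega)) (hjmono q (by omega) (by omega))
  have hmono : ∀ i' a a', 1 ≤ i' → i' < n → a ≤ a' → a' ≤ m →
      c i' a - c (i'+1) a ≤ c i' a' - c (i'+1) a' := by
    intro i' a a' h1 h2 haa ham
    rcases Nat.eq_or_lt_of_le haa with h | h
    · rw [h]
    · exact le_of_lt (hid i' (i'+1) a a' h1 (Nat.lt_succ_self i') (by omega) h ham)
  have hdnn : ∀ i', 1 ≤ i' → i' < n → 0 ≤ d i' := by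
    intro i' h1 h2
    have := hmono i' 0 (j i') h1 h2 (Nat.zero_le _) (hjm i' h1 (le_of_lt h2))
    rw [hc0 i' h1 (by omega), hc0 (i'+1) (by omega) (by omega)] at this
    simp only [hd]
    linarith
  have parta : ∀ i, 1 ≤ i → i ≤ n → ∀ a ≤ m, t a - c i a ≤ t (j i) - c i (j i) := by
    intro i h1 h2 a ha
    rw [hS i h1 h2]
    by_cases hhit : ∃ k, 1 ≤ k ∧ k ≤ n ∧ j k = a
    · obtain ⟨k, hk1, hkn, hka⟩ := hhit
      subst hka
      rw [hS k hk1 hkn]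
      rcases lt_trichotomy k i with hki | hki | hki
      · have hsplit : (∑ i' ∈ Finset.Ioc 0 (k-1), d i') + ∑ i' ∈ Finset.Ioc (k-1) (i-1), d i'
            = ∑ i' ∈ Finset.Ioc 0 (i-1), d i' :=
          Finset.sum_Ioc_consecutive _ (Nat.zero_le _) (by omega)
        have htel : ∑ i' ∈ Finset.Ioc (k-1) (i-1), (c i' (j k) - c (i'+1) (j k))
            = c k (j k) - c i (j k) := by
          have := tele_Ioc (fun i' => c i' (j k)) (i-1) (k-1) (by omega)
          simpa [Nat.sub_add_cancel hk1, Nat.sub_add_cancel h1] using this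
        have hle : ∑ i' ∈ Finset.Ioc (k-1) (i-1), (c i' (j k) - c (i'+1) (j k))
            ≤ ∑ i' ∈ Finset.Ioc (k-1) (i-1), d i' := by
          apply Finset.sum_le_sum
          intro x hx
          simp only [Finset.mem_Ioc] at hx
          exact hmono x (j k) (j x) (by omega) (by omega)
            (hjle x k hk1 (by omega) (by omega)) (hjm x (by omega) (by omega))
        linarith
      · subst hki; linarith
      · have hsplit : (∑ i' ∈ Finset.Ioc 0 (i-1), d i') + ∑ i' ∈ Finset.Ioc (i-1) (k-1), d i'
            = ∑ i' ∈ Finset.Ioc 0 (k-1), d i' :=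
          Finset.sum_Ioc_consecutive _ (Nat.zero_le _) (by omega)
        have htel : ∑ i' ∈ Finset.Ioc (i-1) (k-1), (c i' (j k) - c (i'+1) (j k))
            = c i (j k) - c k (j k) := by
          have := tele_Ioc (fun i' => c i' (j k)) (k-1) (i-1) (by omega)
          simpa [Nat.sub_add_cancel hk1, Nat.sub_add_cancel h1] using this
        have hle : ∑ i' ∈ Finset.Ioc (i-1) (k-1), d i'
            ≤ ∑ i' ∈ Finset.Ioc (i-1) (k-1), (c i' (j k) - c (i'+1) (j k)) := by
          apply Finset.sum_le_sum
          intro x hx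
          simp only [Finset.mem_Ioc] at hx
          exact hmono x (j x) (j k) (by omega) (by omega)
            (hjle k x (by omega) (by omega) (by omega)) (hjm k hk1 hkn)
        linarith
    · push_neg at hhit
      rw [ht_miss a ha hhit]
      have hca : 0 ≤ c i a := hcnn i h1 h2 a ha
      have hSnn : 0 ≤ ∑ i' ∈ Finset.Ioc 0 (i-1), d i' := by
        apply Finset.sum_nonneg
        intro x hx
        simp only [Finset.mem_Ioc] at hx
        exact hdnn x (by omega) (by omega)
      linarith
  refine ⟨parta, ?_⟩
  rw [hIcc, hIcc]
  have hsum : ∀ i ∈ Finset.Ioc 0 n, ρ (j i) - t (j i)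
      = (ρ (j i) - c i (j i)) - ∑ i' ∈ Finset.Ioc 0 (i-1), d i' := by
    intro i hi
    simp only [Finset.mem_Ioc] at hi
    rw [hS i hi.1 hi.2]; ring
  rw [Finset.sum_congr rfl hsum, Finset.sum_sub_distrib, aux_swap]
  have hnn : n - 1 + 1 = n := Nat.succ_pred_eq_of_pos hn
  have hlast : ∑ i ∈ Finset.Ioc 0 n, (ρ (j i) - c i (j i))
      = ∑ i ∈ Finset.Ioc 0 (n-1), (ρ (j i) - c i (j i)) + (ρ (j n) - c n (j n)) := by
    conv_lhs => rw [← hnn]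
    rw [Finset.sum_Ioc_succ_top (Nat.zero_le _), hnn]
  rw [hlast]
  have hrhs : ∑ i ∈ Finset.Ioc 0 (n-1),
      (ρ (j i) - c i (j i) - ((n:ℝ) - i) * (c i (j i) - c (i+1) (j i)))
      = ∑ i ∈ Finset.Ioc 0 (n-1), ((ρ (j i) - c i (j i)) - ((n:ℝ) - i) * d i) := rfl
  rw [hrhs]
  simp only [Finset.sum_sub_distrib]
  ring
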